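/- Let K and Q be n×n real matrices such that det(I + K S) = det(I + Q S) for all diagonal matrices S with strictly positive diagonal entries, and suppose Q is symmetric. Then for all i ≠ j, K_{i,i} K_{j,j} − K_{i,j} K_{j,i} = Q_{i,i} Q_{j,j} − Q_{i,j}², and consequently K_{i,j} K_{j,i} = Q_{i,j}². -/

import Mathlib

open Matrix Filter

theorem two_by_two_minors (n : ℕ) (K Q : Matrix (Fin n) (Fin n) ℝ)
    (hQ : Q.IsSymm)
    (h : ∀ s : Fin n → ℝ, (∀ i, 0 < s i) →
      (1 + K * Matrix.diagonal s).det = (1 + Q * Matrix.diagonal s).det) :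
    ∀ i j : Fin n, i ≠ j →
      K i i * K j j - K i j * K j i = Q i i * Q j j - Q i j ^ 2 ∧
      K i j * K j i = Q i j ^ 2 := by
  -- Step 1: the identity holds for all nonnegative s, by continuity.
  have h' : ∀ s : Fin n → ℝ, (∀ i, 0 ≤ s i) →
      (1 + K * Matrix.diagonal s).det = (1 + Q * Matrix.diagonal s).det := by
    intro s hs
    set fK : ℝ → ℝ := fun ε => (1 + K * Matrix.diagonal (fun k => s k + ε)).det with hfK
    set fQ : ℝ → ℝ := fun ε => (1 + Q * Matrix.diagonal (fun k => s k + ε)).det with hfQ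
    have contd : Continuous fun ε : ℝ => Matrix.diagonal (fun k => s k + ε) :=
      Continuous.matrix_diagonal (continuous_pi fun k => continuous_const.add continuous_id)
    have contK : Continuous fK :=
      Continuous.matrix_det (continuous_const.add (continuous_const.matrix_mul contd))
    have contQ : Continuous fQ :=
      Continuous.matrix_det (continuous_const.add (continuous_const.matrix_mul contd))
    have key : ∀ ε ∈ Set.Ioi (0:ℝ), fK ε = fQ ε := by
      intro ε hε
      exact h _ (fun k => add_pos_of_nonneg_of_pos (hs k) hε)
    have t1 : Tendsto fK (nhdsWithin 0 (Set.Ioi (0:ℝ))) (nhds (fK 0)) :=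
      (contK.tendsto 0).mono_left nhdsWithin_le_nhds
    have t2 : Tendsto fQ (nhdsWithin 0 (Set.Ioi (0:ℝ))) (nhds (fQ 0)) :=
      (contQ.tendsto 0).mono_left nhdsWithin_le_nhds
    have t1' : Tendsto fK (nhdsWithin 0 (Set.Ioi (0:ℝ))) (nhds (fQ 0)) :=
      t2.congr' ((eventually_mem_nhdsWithin).mono fun ε hε => (key ε hε).symm)
    have h0 : fK 0 = fQ 0 := tendsto_nhds_unique t1 t1'
    simpa [hfK, hfQ] using h0
  intro i j hij
  -- Step 2: for all t u ≥ 0, the 2x2 reduction.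
  have key2 : ∀ t u : ℝ, 0 ≤ t → 0 ≤ u →
      (1 + K i i * t) * (1 + K j j * u) - (K i j * u) * (K j i * t) =
      (1 + Q i i * t) * (1 + Q j j * u) - (Q i j * u) * (Q j i * t) := by
    intro t u ht hu
    set s : Fin n → ℝ := fun k => (if k = i then t else 0) + (if k = j then u else 0) with hsdef
    have hs : ∀ k, 0 ≤ s k := by
      intro k
      have : (0:ℝ) ≤ (if k = i then t else 0) := by split <;> simp [ht]
      have : (0:ℝ) ≤ (if k = j then u else 0) := by split <;> simp [hu]
      positivity
    set B : Matrix (Fin n) (Fin 2) ℝ :=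
      fun k p => if k = ![i, j] p then ![t, u] p else 0 with hBdef
    set C : Matrix (Fin 2) (Fin n) ℝ :=
      fun p k => if k = ![i, j] p then 1 else 0 with hCdef
    have hBC : B * C = Matrix.diagonal s := by
      ext k l
      simp only [Matrix.mul_apply]
      simp only [Matrix.mul_apply, Fin.sum_univ_two, hBdef, hCdef, hsdef, Matrix.diagonal,
        Matrix.of_apply, Matrix.cons_val_zero, Matrix.cons_val_one, Matrix.head_cons]
      rcases eq_or_ne k i with rfl | hki <;> rcases eq_or_ne k j with rfl | hkj <;>
        rcases eq_or_ne l k with rfl | hlk <;>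
        simp_all <;> split_ifs <;> simp_all <;> (intro hkl; exact absurd hkl.symm hlk)
    have hdet : ∀ M : Matrix (Fin n) (Fin n) ℝ,
        (1 + M * Matrix.diagonal s).det =
        (1 + M i i * t) * (1 + M j j * u) - (M i j * u) * (M j i * t) := by
      intro M
      rw [← hBC, ← Matrix.mul_assoc, Matrix.det_one_add_mul_comm]
      have hCMB : C * (M * B) =
          Matrix.of ![![M i i * t, M i j * u], ![M j i * t, M j j * u]] := by
        ext p q
        have : (C * (M * B)) p q = M (![i,j] p) (![i,j] q) * ![t,u] q := by
          simp only [Matrix.mul_apply]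
          simp only [Matrix.mul_apply, hBdef, hCdef, ite_mul, one_mul, zero_mul,
            mul_ite, mul_zero]
          rw [Finset.sum_ite_eq' Finset.univ (![i,j] p)]
          simp only [Finset.mem_univ, if_true]
          rw [Finset.sum_ite_eq' Finset.univ (![i,j] q)]
          simp
        rw [this]
        fin_cases p <;> fin_cases q <;> simp
      rw [hCMB, Matrix.det_fin_two]
      simp only [Matrix.add_apply, Matrix.one_apply, Matrix.of_apply, Matrix.cons_val',
        Matrix.cons_val_zero, Matrix.cons_val_one, Matrix.head_cons, Matrix.head_fin_const,
        Matrix.empty_val', Matrix.cons_val_fin_one]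
      norm_num
    have := h' s hs
    rw [hdet K, hdet Q] at this
    exact this
  have h10 := key2 1 0 zero_le_one le_rfl
  have h01 := key2 0 1 le_rfl zero_le_one
  have h11 := key2 1 1 zero_le_one zero_le_one
  have hKii : K i i = Q i i := by nlinarith [h10]
  have hKjj : K j j = Q j j := by nlinarith [h01]
  have hQji : Q j i = Q i j := by
    have := congrFun (congrFun hQ i) j
    simpa [Matrix.transpose_apply] using this
  rw [hKii, hKjj, hQji] at h11
  have h2 : K i j * K j i = Q i j ^ 2 := by nlinarith [h11]
  exact ⟨by rw [hKii, hKjj, h2], h2⟩
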